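/- arXiv:0907.3704 — 3 statements merged into one kernel-verified Lean document; each statement's English description precedes it below -/
import Mathlib

section
/- Min-entropy uncertainty relation: for any two orthonormal bases A and B of ℂ^d and any unit vector |ψ⟩, (1/2)(H_∞(A||ψ⟩) + H_∞(B||ψ⟩)) ≥ -log((1 + c(A,B))/2), equivalently (max_a |⟨a|ψ⟩|^2)(max_b |⟨b|ψ⟩|^2) ≤ ((1+c(A,B))/2)^2. -/
noncomputable section

open scoped InnerProductSpace

lemma key_ineq {E : Type*} [NormedAddCommGroup E] [InnerProductSpace ℂ E]
    (a b ψ : E) (ha : ‖a‖ = 1) (hb : ‖b‖ = 1) (hψ : ‖ψ‖ = 1) :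
    ‖⟪a, ψ⟫_ℂ‖ ^ 2 + ‖⟪b, ψ⟫_ℂ‖ ^ 2 ≤ 1 + ‖⟪a, b⟫_ℂ‖ := by
  set α := ⟪a, ψ⟫_ℂ with hα
  set β := ⟪b, ψ⟫_ℂ with hβ
  set s : ℝ := ‖α‖ ^ 2 + ‖β‖ ^ 2 with hs
  have hs0 : 0 ≤ s := by positivity
  have hc0 : (0:ℝ) ≤ ‖⟪a, b⟫_ℂ‖ := norm_nonneg _
  set φ := α • a + β • b with hφ
  have h1 : s ≤ ‖φ‖ := by
    have e1 : (⟪φ, ψ⟫_ℂ).re = s := by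
      simp [hφ, inner_add_left, inner_smul_left, ← hα, ← hβ, Complex.add_re,
        Complex.mul_re, Complex.conj_re, Complex.conj_im, hs,
        Complex.sq_norm, Complex.normSq_apply]
    calc s = (⟪φ, ψ⟫_ℂ).re := e1.symm
    _ ≤ ‖⟪φ, ψ⟫_ℂ‖ := Complex.re_le_norm _
    _ ≤ ‖φ‖ * ‖ψ‖ := norm_inner_le_norm _ _
    _ = ‖φ‖ := by rw [hψ, mul_one]
  have h2 : ‖φ‖ ^ 2 ≤ (1 + ‖⟪a, b⟫_ℂ‖) * s := by
    have e2 : ‖φ‖ ^ 2 = ‖α‖ ^ 2 + 2 * (⟪α • a, β • b⟫_ℂ).re + ‖β‖ ^ 2 := by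
      rw [hφ, norm_add_sq (𝕜 := ℂ)]
      simp only [norm_smul, ha, hb, mul_one, RCLike.re_to_complex]
    have e3 : (⟪α • a, β • b⟫_ℂ).re ≤ ‖α‖ * ‖β‖ * ‖⟪a, b⟫_ℂ‖ := by
      calc (⟪α • a, β • b⟫_ℂ).re ≤ ‖⟪α • a, β • b⟫_ℂ‖ := Complex.re_le_norm _
      _ = ‖α‖ * ‖β‖ * ‖⟪a, b⟫_ℂ‖ := by
        rw [inner_smul_left, inner_smul_right]
        simp [mul_assoc]
    nlinarith [sq_nonneg (‖α‖ - ‖β‖), norm_nonneg α, norm_nonneg β]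
  have h3 : s ^ 2 ≤ (1 + ‖⟪a, b⟫_ℂ‖) * s := le_trans (by nlinarith [norm_nonneg φ]) h2
  nlinarith [h3, hs0, hc0]

lemma exists_inner_ne_zero {d : ℕ} (hd : 0 < d) (A : Fin d → EuclideanSpace ℂ (Fin d))
    (hA : Orthonormal ℂ A) {ψ : EuclideanSpace ℂ (Fin d)} (hψ : ψ ≠ 0) :
    ∃ i, ⟪A i, ψ⟫_ℂ ≠ 0 := by
  haveI : Nonempty (Fin d) := ⟨⟨0, hd⟩⟩
  by_contra h
  push_neg at h
  have hspan : Submodule.span ℂ (Set.range A) = ⊤ :=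
    hA.linearIndependent.span_eq_top_of_card_eq_finrank (by simp)
  have hle : Submodule.span ℂ (Set.range A) ≤ (ℂ ∙ ψ)ᗮ := by
    rw [Submodule.span_le]
    rintro _ ⟨i, rfl⟩
    exact Submodule.mem_orthogonal_singleton_iff_inner_left.2 (h i)
  rw [hspan, top_le_iff] at hle
  have : ψ ∈ (ℂ ∙ ψ)ᗮ := hle ▸ Submodule.mem_top
  have := Submodule.mem_orthogonal_singleton_iff_inner_left.1 this
  exact hψ (inner_self_eq_zero.1 this)

/-- Min-entropy. -/
def minEntropy {X : Type*} [Fintype X] [Nonempty X] (p : X → ℝ) : ℝ :=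
  -Real.log (⨆ x, p x)

/-- Probability of outcome `x` when measuring the pure state `ψ` in the basis `B`. -/
def measProb {d : ℕ} (B : Fin d → EuclideanSpace ℂ (Fin d))
    (ψ : EuclideanSpace ℂ (Fin d)) (x : Fin d) : ℝ :=
  ‖(inner ℂ (B x) ψ : ℂ)‖ ^ 2

/-- Min-entropy uncertainty relation: for orthonormal bases `A`, `B` of `ℂ^d` and a unit
vector `ψ`, `(1/2)(H_∞(A|ψ) + H_∞(B|ψ)) ≥ -log((1 + c(A,B))/2)`; equivalently,
`(max_a |⟨a|ψ⟩|²)(max_b |⟨b|ψ⟩|²) ≤ ((1 + c(A,B))/2)²`. -/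
theorem min_entropy_uncertainty {d : ℕ} (hd : 0 < d)
    (A B : Fin d → EuclideanSpace ℂ (Fin d))
    (hA : Orthonormal ℂ A) (hB : Orthonormal ℂ B)
    (ψ : EuclideanSpace ℂ (Fin d)) (hψ : ‖ψ‖ = 1) :
    haveI : Nonempty (Fin d) := ⟨⟨0, hd⟩⟩
    (-Real.log ((1 + ⨆ kl : Fin d × Fin d, ‖(inner ℂ (A kl.1) (B kl.2) : ℂ)‖) / 2) ≤
      (1 / 2) * (minEntropy (measProb A ψ) + minEntropy (measProb B ψ))) ∧
    ((⨆ a, measProb A ψ a) * (⨆ b, measProb B ψ b) ≤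
      ((1 + ⨆ kl : Fin d × Fin d, ‖(inner ℂ (A kl.1) (B kl.2) : ℂ)‖) / 2) ^ 2) := by
  haveI : Nonempty (Fin d) := ⟨⟨0, hd⟩⟩
  set c : ℝ := ⨆ kl : Fin d × Fin d, ‖(inner ℂ (A kl.1) (B kl.2) : ℂ)‖ with hc
  set P : ℝ := ⨆ a, measProb A ψ a with hP
  set Q : ℝ := ⨆ b, measProb B ψ b with hQ
  obtain ⟨a, ha⟩ : ∃ a, measProb A ψ a = P := exists_eq_ciSup_of_finite
  obtain ⟨b, hb⟩ : ∃ b, measProb B ψ b = Q := exists_eq_ciSup_of_finite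
  have hab : ‖⟪A a, B b⟫_ℂ‖ ≤ c :=
    le_ciSup (f := fun kl : Fin d × Fin d => ‖(inner ℂ (A kl.1) (B kl.2) : ℂ)‖)
      (Set.Finite.bddAbove (Set.finite_range _)) (a, b)
  have hc0 : (0:ℝ) ≤ c := le_trans (norm_nonneg _) hab
  have hkey : P + Q ≤ 1 + c := by
    have h := key_ineq (A a) (B b) ψ (hA.1 a) (hB.1 b) hψ
    have ha' : ‖⟪A a, ψ⟫_ℂ‖ ^ 2 = P := ha
    have hb' : ‖⟪B b, ψ⟫_ℂ‖ ^ 2 = Q := hb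
    linarith
  have hP0 : 0 ≤ P := ha ▸ sq_nonneg _
  have hQ0 : 0 ≤ Q := hb ▸ sq_nonneg _
  have hmain : P * Q ≤ ((1 + c) / 2) ^ 2 := by nlinarith [sq_nonneg (P - Q), hkey, hP0, hQ0, hc0]
  refine ⟨?_, hmain⟩
  -- positivity of P and Q
  have hψ0 : ψ ≠ 0 := by intro h; rw [h, norm_zero] at hψ; norm_num at hψ
  have hPpos : 0 < P := by
    obtain ⟨i, hi⟩ := exists_inner_ne_zero hd A hA hψ0
    have h1 : 0 < measProb A ψ i := by
      simp only [measProb]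
      exact pow_pos (norm_pos_iff.mpr hi) 2
    exact lt_of_lt_of_le h1 (le_ciSup (Set.Finite.bddAbove (Set.finite_range _)) i)
  have hQpos : 0 < Q := by
    obtain ⟨i, hi⟩ := exists_inner_ne_zero hd B hB hψ0
    have h1 : 0 < measProb B ψ i := by
      simp only [measProb]
      exact pow_pos (norm_pos_iff.mpr hi) 2
    exact lt_of_lt_of_le h1 (le_ciSup (Set.Finite.bddAbove (Set.finite_range _)) i)
  have hM : (0:ℝ) < (1 + c) / 2 := by linarith
  have hlog : Real.log (P * Q) ≤ Real.log (((1 + c) / 2) ^ 2) :=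
    Real.log_le_log (by positivity) hmain
  rw [Real.log_mul (ne_of_gt hPpos) (ne_of_gt hQpos), Real.log_pow] at hlog
  simp only [minEntropy, ← hP, ← hQ]
  push_cast at hlog
  linarith
end
end

section
/- For two mutually unbiased bases of ℂ^2 (e.g., the computational basis {|0⟩,|1⟩} and Hadamard basis {|+⟩,|−⟩}), the state |ψ⟩ = cos(π/8)|0⟩ + sin(π/8)|1⟩ attains equality in the min-entropy uncertainty relation: (1/2)(H_∞(A||ψ⟩) + H_∞(B||ψ⟩)) = -log(1/2 + 1/(2√2)). -/
noncomputable section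

open Real

/-- The computational basis of ℂ². -/
def compBasis : Fin 2 → EuclideanSpace ℂ (Fin 2) := fun i => EuclideanSpace.single i 1

/-- The Hadamard basis {|+⟩, |−⟩} of ℂ². -/
def hadBasis : Fin 2 → EuclideanSpace ℂ (Fin 2) := fun j =>
  (WithLp.equiv 2 (Fin 2 → ℂ)).symm
    ![((Real.sqrt 2)⁻¹ : ℂ), if j = 0 then ((Real.sqrt 2)⁻¹ : ℂ) else -((Real.sqrt 2)⁻¹ : ℂ)]

/-- The state cos(π/8)|0⟩ + sin(π/8)|1⟩. -/
def optState : EuclideanSpace ℂ (Fin 2) :=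
  (WithLp.equiv 2 (Fin 2 → ℂ)).symm
    ![(Real.cos (π / 8) : ℂ), (Real.sin (π / 8) : ℂ)]

lemma iSup_fin_two (p : Fin 2 → ℝ) (h : p 1 ≤ p 0) : (⨆ x, p x) = p 0 := by
  refine le_antisymm (ciSup_le fun x => ?_) (le_ciSup (Set.Finite.bddAbove (Set.finite_range p)) 0)
  fin_cases x
  · exact le_rfl
  · exact h

lemma measComp0 : measProb compBasis optState 0 = Real.cos (π/8) ^ 2 := by
  simp [measProb, compBasis, optState, EuclideanSpace.inner_single_left,
    -Real.cos_pi_div_eight, -Real.sin_pi_div_eight, -Complex.ofReal_cos, -Complex.ofReal_sin,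
    sq_abs]

lemma measComp1 : measProb compBasis optState 1 = Real.sin (π/8) ^ 2 := by
  simp [measProb, compBasis, optState, EuclideanSpace.inner_single_left,
    -Real.cos_pi_div_eight, -Real.sin_pi_div_eight, -Complex.ofReal_cos, -Complex.ofReal_sin,
    sq_abs]

lemma measHad0 : measProb hadBasis optState 0 = 2⁻¹ * (Real.cos (π/8) + Real.sin (π/8)) ^ 2 := by
  simp [measProb, hadBasis, optState, inner, Fin.sum_univ_two,
    -Real.cos_pi_div_eight, -Real.sin_pi_div_eight, -Complex.ofReal_cos, -Complex.ofReal_sin,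
    ← Complex.ofReal_inv, ← Complex.ofReal_mul, ← Complex.ofReal_add, Complex.norm_real, sq_abs]
  have h : ((√2:ℝ))⁻¹ ^ 2 = (2:ℝ)⁻¹ := by rw [inv_pow, Real.sq_sqrt] <;> norm_num
  nlinarith [h]

lemma measHad1 : measProb hadBasis optState 1 = 2⁻¹ * (Real.cos (π/8) - Real.sin (π/8)) ^ 2 := by
  simp [measProb, hadBasis, optState, inner, Fin.sum_univ_two,
    -Real.cos_pi_div_eight, -Real.sin_pi_div_eight, -Complex.ofReal_cos, -Complex.ofReal_sin,
    ← Complex.ofReal_inv, ← Complex.ofReal_mul, ← Complex.ofReal_add, ← Complex.ofReal_neg,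
    ← Complex.ofReal_sub, Complex.norm_real, sq_abs, inv_pow, Real.sq_sqrt]
  have h : ((√2:ℝ))⁻¹ ^ 2 = (2:ℝ)⁻¹ := by rw [inv_pow, Real.sq_sqrt] <;> norm_num
  nlinarith [h]

lemma cos_sq_pi_div_eight : Real.cos (π/8) ^ 2 = 1 / 2 + 1 / (2 * Real.sqrt 2) := by
  have h1 : Real.cos (π/8) ^ 2 = 1/2 + Real.cos (π/4) / 2 := by
    have := Real.cos_sq (π/8)
    rw [this]; ring_nf
  have h2 : Real.cos (π/4) = Real.sqrt 2 / 2 := Real.cos_pi_div_four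
  have hs : (Real.sqrt 2) ^ 2 = 2 := Real.sq_sqrt (by norm_num)
  have hpos : (0:ℝ) < Real.sqrt 2 := Real.sqrt_pos.mpr (by norm_num)
  rw [h1, h2]
  field_simp
  nlinarith [hs, hpos]

lemma had0_val : 2⁻¹ * (Real.cos (π/8) + Real.sin (π/8)) ^ 2 = 1 / 2 + 1 / (2 * Real.sqrt 2) := by
  have h1 : Real.sin (π/8) ^ 2 + Real.cos (π/8) ^ 2 = 1 := Real.sin_sq_add_cos_sq _
  have h2 : 2 * Real.sin (π/8) * Real.cos (π/8) = Real.sin (π/4) := by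
    rw [← Real.sin_two_mul, show 2*(π/8) = π/4 by ring]
  have h3 : Real.sin (π/4) = Real.sqrt 2 / 2 := Real.sin_pi_div_four
  have hs : (Real.sqrt 2) ^ 2 = 2 := Real.sq_sqrt (by norm_num)
  have hpos : (0:ℝ) < Real.sqrt 2 := Real.sqrt_pos.mpr (by norm_num)
  have key : 2⁻¹ * (Real.cos (π/8) + Real.sin (π/8)) ^ 2 = 1/2 + Real.sqrt 2 / 4 := by
    nlinarith [h1, h2, h3]
  rw [key]
  field_simp
  nlinarith [hs, hpos]

/-- For the computational and Hadamard bases of ℂ², the state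
`cos(π/8)|0⟩ + sin(π/8)|1⟩` attains equality in the min-entropy uncertainty relation:
`(1/2)(H_∞(A|ψ) + H_∞(B|ψ)) = -log(1/2 + 1/(2√2))`. -/
theorem min_entropy_uncertainty_tight :
    (1 / 2) * (minEntropy (measProb compBasis optState)
        + minEntropy (measProb hadBasis optState))
      = -Real.log (1 / 2 + 1 / (2 * Real.sqrt 2)) := by
  have hsin : 0 ≤ Real.sin (π/8) :=
    Real.sin_nonneg_of_nonneg_of_le_pi (by positivity) (by nlinarith [Real.pi_pos])
  have hcos : 0 ≤ Real.cos (π/8) :=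
    Real.cos_nonneg_of_mem_Icc ⟨by nlinarith [Real.pi_pos], by nlinarith [Real.pi_pos]⟩
  have hcs : Real.sin (π/8) ≤ Real.cos (π/8) := by
    have h := Real.cos_two_mul (π/8)
    have h1 := Real.sin_sq_add_cos_sq (π/8)
    have h4 : Real.cos (2 * (π/8)) = Real.sqrt 2 / 2 := by
      rw [show 2 * (π/8) = π/4 by ring]; exact Real.cos_pi_div_four
    have : 0 ≤ Real.sqrt 2 := Real.sqrt_nonneg 2
    nlinarith [h, h1, h4]
  have hsupA : (⨆ x, measProb compBasis optState x) = 1 / 2 + 1 / (2 * Real.sqrt 2) := by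
    rw [iSup_fin_two _ (by rw [measComp0, measComp1]; nlinarith), measComp0,
      cos_sq_pi_div_eight]
  have hsupB : (⨆ x, measProb hadBasis optState x) = 1 / 2 + 1 / (2 * Real.sqrt 2) := by
    rw [iSup_fin_two _ (by rw [measHad0, measHad1]; nlinarith), measHad0, had0_val]
  rw [minEntropy, minEntropy, hsupA, hsupB]
  ring
end
end

section
/- Collision-entropy uncertainty relation for MUBs: for any L mutually unbiased bases B_1,...,B_L of ℂ^d with d = 2^n and any pure state |Ψ⟩, (1/L) Σ_{b=1}^L H_2(B_b||Ψ⟩) ≥ −log((L + d − 1)/(dL)). Equivalently, Σ_b Σ_x |⟨x_b|Ψ⟩|^4 ≤ (L + d − 1)/d. -/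
noncomputable section

open Finset

def mat {d : ℕ} (w : EuclideanSpace ℂ (Fin d)) : EuclideanSpace ℂ (Fin d × Fin d) :=
  WithLp.toLp 2 (fun p : Fin d × Fin d => w p.1 * (starRingEnd ℂ) (w p.2))
def idm (d : ℕ) : EuclideanSpace ℂ (Fin d × Fin d) :=
  WithLp.toLp 2 (fun p : Fin d × Fin d => if p.1 = p.2 then (1 : ℂ) else 0)

lemma inner_mat_mat {d : ℕ} (u w : EuclideanSpace ℂ (Fin d)) :
    (inner ℂ (mat u) (mat w) : ℂ) = ((‖(inner ℂ u w : ℂ)‖^2 : ℝ) : ℂ) := by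
  have h : (inner ℂ (mat u) (mat w) : ℂ)
      = (∑ i, (starRingEnd ℂ) (u i) * w i) * (∑ j, u j * (starRingEnd ℂ) (w j)) := by
    rw [Finset.sum_mul_sum]
    simp only [PiLp.inner_apply, mat, RCLike.inner_apply, Fintype.sum_prod_type, map_mul,
      starRingEnd_self_apply]
    congr 1; ext i; congr 1; ext j; ring
  rw [h]
  have h1 : (inner ℂ u w : ℂ) = ∑ i, (starRingEnd ℂ) (u i) * w i := by
    simp [PiLp.inner_apply, RCLike.inner_apply, mul_comm]
  have h2 : (starRingEnd ℂ) (inner ℂ u w : ℂ) = ∑ j, u j * (starRingEnd ℂ) (w j) := by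
    rw [h1, map_sum]; congr 1; ext j; simp [mul_comm]
  rw [← h1, ← h2, Complex.mul_conj']
  norm_cast

lemma inner_idm_mat {d : ℕ} (w : EuclideanSpace ℂ (Fin d)) :
    (inner ℂ (idm d) (mat w) : ℂ) = ((‖w‖^2 : ℝ) : ℂ) := by
  have : (inner ℂ (idm d) (mat w) : ℂ) = ∑ i, w i * (starRingEnd ℂ) (w i) := by
    simp [PiLp.inner_apply, idm, mat, RCLike.inner_apply, Fintype.sum_prod_type,
      apply_ite (starRingEnd ℂ)]
  rw [this]
  have h2 : ‖w‖^2 = ∑ i, ‖w i‖^2 := by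
    rw [EuclideanSpace.norm_eq]
    rw [Real.sq_sqrt (by positivity)]
  rw [h2]
  push_cast
  congr 1; ext i
  rw [Complex.mul_conj']

lemma inner_idm_idm (d : ℕ) : (inner ℂ (idm d) (idm d) : ℂ) = (d : ℂ) := by
  rw [PiLp.inner_apply, Fintype.sum_prod_type]; simp [idm, RCLike.inner_apply, apply_ite norm,
    apply_ite Complex.ofReal, ite_pow]

lemma parseval {d : ℕ} (v : Fin d → EuclideanSpace ℂ (Fin d)) (hv : Orthonormal ℂ v) (hd : 0 < d)
    (Ψ : EuclideanSpace ℂ (Fin d)) :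
    ∑ x, ‖(inner ℂ (v x) Ψ : ℂ)‖^2 = ‖Ψ‖^2 := by
  haveI : Nonempty (Fin d) := ⟨⟨0, hd⟩⟩
  let b := basisOfOrthonormalOfCardEqFinrank hv (by simp)
  have hb : ⇑b = v := coe_basisOfOrthonormalOfCardEqFinrank hv _
  let ob : OrthonormalBasis (Fin d) ℂ (EuclideanSpace ℂ (Fin d)) :=
    b.toOrthonormalBasis (by rwa [hb])
  have hob : ∀ i, ob i = v i := by
    intro i; simp only [ob, Module.Basis.coe_toOrthonormalBasis, hb]
  have key := ob.sum_inner_mul_inner Ψ Ψ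
  have : ∀ i, (inner ℂ Ψ (ob i) : ℂ) * inner ℂ (ob i) Ψ = ((‖(inner ℂ (v i) Ψ : ℂ)‖^2 : ℝ) : ℂ) := by
    intro i
    rw [hob, ← inner_conj_symm Ψ (v i), Complex.conj_mul']
    norm_cast
  rw [Finset.sum_congr rfl (fun i _ => this i)] at key
  have h2 : (inner ℂ Ψ Ψ : ℂ) = ((‖Ψ‖^2 : ℝ) : ℂ) := by
    rw [inner_self_eq_norm_sq_to_K]; norm_cast
  rw [h2, ← Complex.ofReal_sum] at key
  exact_mod_cast key

lemma mub_sum_bound {d L : ℕ} (hd : 0 < d) (hL : 0 < L)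
    (v : Fin L → Fin d → EuclideanSpace ℂ (Fin d))
    (horth : ∀ b, Orthonormal ℂ (v b))
    (hmub : ∀ b b', b ≠ b' → ∀ x x',
      ‖(inner ℂ (v b x) (v b' x') : ℂ)‖ ^ 2 = 1 / (d : ℝ))
    (Ψ : EuclideanSpace ℂ (Fin d)) (hΨ : ‖Ψ‖ = 1) :
    ∑ b, ∑ x, ‖(inner ℂ (v b x) Ψ : ℂ)‖ ^ 2 * ‖(inner ℂ (v b x) Ψ : ℂ)‖ ^ 2
      ≤ ((L : ℝ) + d - 1) / d := by
  have hdR : (0:ℝ) < d := by exact_mod_cast hd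
  set t : Fin L → Fin d → ℝ := fun b x => ‖(inner ℂ (v b x) Ψ : ℂ)‖^2 with ht
  have hsum : ∀ b, ∑ x, t b x = 1 := by
    intro b; rw [ht]; simp only
    rw [parseval (v b) (horth b) hd Ψ, hΨ]; norm_num
  set c : Fin L → Fin d → ℝ := fun b x => t b x - 1/d with hc
  have hc0 : ∀ b, ∑ x, c b x = 0 := by
    intro b
    simp only [hc, Finset.sum_sub_distrib, hsum b, Finset.sum_const, card_univ,
      Fintype.card_fin, nsmul_eq_mul]
    field_simp; ring
  set A : EuclideanSpace ℂ (Fin d × Fin d) := mat Ψ - ((1/(d:ℝ) : ℝ) : ℂ) • idm d with hA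
  set B : EuclideanSpace ℂ (Fin d × Fin d) :=
    ∑ b, ∑ x, ((c b x : ℝ) : ℂ) • mat (v b x) with hB
  set K : ℝ := ∑ b, ∑ x, (c b x)^2 with hK
  have hKnn : 0 ≤ K := by positivity
  -- inner ℂ A (mat (v b x)) = c b x
  have hAm : ∀ b x, (inner ℂ A (mat (v b x)) : ℂ) = ((c b x : ℝ) : ℂ) := by
    intro b x
    rw [hA, inner_sub_left, inner_smul_left, inner_mat_mat, inner_idm_mat,
      Complex.conj_ofReal]
    have h1 : ‖(inner ℂ Ψ (v b x) : ℂ)‖ = ‖(inner ℂ (v b x) Ψ : ℂ)‖ := norm_inner_symm _ _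
    have h2 : ‖v b x‖ = 1 := (horth b).1 x
    rw [h1, h2]
    push_cast [hc, ht]
    ring
  have hAB : (inner ℂ A B : ℂ) = ((K : ℝ) : ℂ) := by
    rw [hB]
    rw [inner_sum]
    have : ∀ b, (inner ℂ A (∑ x, ((c b x : ℝ) : ℂ) • mat (v b x)) : ℂ)
        = ((∑ x, (c b x)^2 : ℝ) : ℂ) := by
      intro b
      rw [inner_sum]
      push_cast
      congr 1; ext x
      rw [inner_smul_right, hAm b x]
      push_cast; ring
    rw [Finset.sum_congr rfl (fun b _ => this b), hK]
    push_cast; ring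
  have hBB : (inner ℂ B B : ℂ) = ((K : ℝ) : ℂ) := by
    rw [hB, sum_inner, hK]
    have hb' : ∀ b, (inner ℂ (∑ x, ((c b x : ℝ) : ℂ) • mat (v b x)) B : ℂ)
        = ((∑ x, (c b x)^2 : ℝ) : ℂ) := by
      intro b
      rw [sum_inner]
      have hx : ∀ x, (inner ℂ (((c b x : ℝ) : ℂ) • mat (v b x)) B : ℂ)
          = ((c b x : ℝ) : ℂ) * ∑ b', ∑ x', ((c b' x' : ℝ) : ℂ) *
              ((‖(inner ℂ (v b x) (v b' x') : ℂ)‖^2 : ℝ) : ℂ) := by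
        intro x
        rw [inner_smul_left, Complex.conj_ofReal, hB, inner_sum]
        congr 1
        refine Finset.sum_congr rfl fun b' _ => ?_
        rw [inner_sum]
        refine Finset.sum_congr rfl fun x' _ => ?_
        rw [inner_smul_right, inner_mat_mat]
      rw [Finset.sum_congr rfl (fun x _ => hx x)]
      -- now evaluate the double sum
      have hval : ∀ x, (∑ b', ∑ x', ((c b' x' : ℝ) : ℂ) *
              ((‖(inner ℂ (v b x) (v b' x') : ℂ)‖^2 : ℝ) : ℂ)) = ((c b x : ℝ) : ℂ) := by
        intro x
        have hterm : ∀ b', (∑ x', ((c b' x' : ℝ) : ℂ) *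
            ((‖(inner ℂ (v b x) (v b' x') : ℂ)‖^2 : ℝ) : ℂ))
            = if b' = b then ((c b x : ℝ) : ℂ) else 0 := by
          intro b'
          by_cases hbb : b' = b
          · subst hbb
            have : ∀ x', ((‖(inner ℂ (v b' x) (v b' x') : ℂ)‖^2 : ℝ) : ℂ)
                = if x = x' then 1 else 0 := by
              intro x'
              have := (orthonormal_iff_ite.mp (horth b')) x x'
              rw [this]
              by_cases hxx : x = x' <;> simp [hxx]
            simp only [this, mul_ite, mul_one, mul_zero]
            simp
          · have : ∀ x', ((‖(inner ℂ (v b x) (v b' x') : ℂ)‖^2 : ℝ) : ℂ) = ((1/(d:ℝ) : ℝ) : ℂ) := by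
              intro x'
              rw [hmub b b' (fun h => hbb h.symm) x x']
            simp only [this, ← Finset.sum_mul]
            rw [← Complex.ofReal_sum, hc0 b']
            simp [hbb]
        rw [Finset.sum_congr rfl (fun b' _ => hterm b')]
        simp
      rw [Finset.sum_congr rfl (fun x _ => by rw [hval x])]
      push_cast
      congr 1; ext x; ring
    rw [Finset.sum_congr rfl (fun b _ => hb' b)]
    push_cast; ring
  have hdC : (d:ℂ) ≠ 0 := by
    exact_mod_cast (Nat.cast_ne_zero (R := ℂ)).mpr hd.ne'
  have hAA : (inner ℂ A A : ℂ) = ((1 - 1/(d:ℝ) : ℝ) : ℂ) := by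
    have e2 : (inner ℂ (idm d) (mat Ψ) : ℂ) = 1 := by rw [inner_idm_mat, hΨ]; norm_num
    have e3 : (inner ℂ (mat Ψ) (idm d) : ℂ) = 1 := by
      rw [← inner_conj_symm (mat Ψ) (idm d), e2]; simp
    have e1 : (inner ℂ (mat Ψ) (mat Ψ) : ℂ) = 1 := by
      rw [inner_mat_mat]
      have h5 : (inner ℂ Ψ Ψ : ℂ) = 1 := by rw [inner_self_eq_norm_sq_to_K, hΨ]; norm_num
      rw [h5]; norm_num
    rw [hA, inner_sub_left, inner_sub_right, inner_sub_right, inner_smul_left,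
      inner_smul_right, inner_smul_right, inner_smul_left, e1, e2, e3, inner_idm_idm,
      Complex.conj_ofReal]
    push_cast
    field_simp; ring
  -- Cauchy-Schwarz
  have hnB : ‖B‖^2 = K := by
    have := @inner_self_eq_norm_sq ℂ _ _ _ _ B
    rw [hBB] at this
    simpa using this.symm
  have hnA : ‖A‖^2 = 1 - 1/(d:ℝ) := by
    have := @inner_self_eq_norm_sq ℂ _ _ _ _ A
    rw [hAA] at this
    simpa using this.symm
  have hCS : K ≤ ‖A‖ * ‖B‖ := by
    have h := re_inner_le_norm (𝕜 := ℂ) A B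
    rw [hAB] at h
    simpa using h
  have hKle : K ≤ 1 - 1/(d:ℝ) := by
    nlinarith [norm_nonneg A, norm_nonneg B, sq_nonneg (‖A‖ - ‖B‖)]
  -- relate K and the target sum
  have hS : ∀ b, ∑ x, (t b x)^2 = (∑ x, (c b x)^2) + 1/(d:ℝ) := by
    intro b
    have h1 := hsum b
    have key : ∀ x : Fin d, (t b x)^2 = (c b x)^2 + (2/(d:ℝ)) * t b x - 1/(d:ℝ)^2 := by
      intro x; simp only [hc]; field_simp; ring
    rw [Finset.sum_congr rfl (fun x _ => key x), Finset.sum_sub_distrib,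
      Finset.sum_add_distrib, ← Finset.mul_sum, h1, Finset.sum_const, card_univ,
      Fintype.card_fin, nsmul_eq_mul]
    have hdne : (d:ℝ) ≠ 0 := hdR.ne'
    field_simp
    ring
  have hfinal : ∑ b, ∑ x, (t b x)^2 = K + (L:ℝ)/d := by
    rw [Finset.sum_congr rfl (fun b _ => hS b), Finset.sum_add_distrib, hK,
      Finset.sum_const, card_univ, Fintype.card_fin, nsmul_eq_mul]
    ring
  have : ∑ b, ∑ x, ‖(inner ℂ (v b x) Ψ : ℂ)‖^2 * ‖(inner ℂ (v b x) Ψ : ℂ)‖^2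
      = ∑ b, ∑ x, (t b x)^2 := by
    refine Finset.sum_congr rfl fun b _ => Finset.sum_congr rfl fun x _ => ?_
    rw [ht]; ring
  rw [this, hfinal]
  have : ((L : ℝ) + d - 1) / d = (1 - 1/(d:ℝ)) + (L:ℝ)/d := by field_simp; ring
  rw [this]
  linarith

/-- Collision-entropy uncertainty relation for MUBs: for any `L` mutually unbiased bases
of `ℂ^d`, `d = 2ⁿ`, and any pure state `Ψ`,
`(1/L) Σ_b H₂(B_b|Ψ) ≥ -log((L + d - 1)/(dL))`; equivalently
`Σ_b Σ_x |⟨x_b|Ψ⟩|⁴ ≤ (L + d - 1)/d`. -/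
theorem collision_entropy_mub_uncertainty {n L : ℕ} (hL : 0 < L)
    (v : Fin L → Fin (2 ^ n) → EuclideanSpace ℂ (Fin (2 ^ n)))
    (horth : ∀ b, Orthonormal ℂ (v b))
    (hmub : ∀ b b', b ≠ b' → ∀ x x',
      ‖(inner ℂ (v b x) (v b' x') : ℂ)‖ ^ 2 = 1 / (2 ^ n : ℝ))
    (Ψ : EuclideanSpace ℂ (Fin (2 ^ n))) (hΨ : ‖Ψ‖ = 1) :
    (-Real.log (((L : ℝ) + 2 ^ n - 1) / (2 ^ n * L)) ≤
      (1 / (L : ℝ)) * ∑ b, -Real.log (∑ x, ‖(inner ℂ (v b x) Ψ : ℂ)‖ ^ 4)) ∧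
    (∑ b, ∑ x, ‖(inner ℂ (v b x) Ψ : ℂ)‖ ^ 4 ≤ ((L : ℝ) + 2 ^ n - 1) / 2 ^ n) := by
  have hd : 0 < 2 ^ n := pow_pos (by norm_num) n
  have hdR : (0:ℝ) < 2 ^ n := by positivity
  have hLR : (0:ℝ) < L := by exact_mod_cast hL
  have hcast : ((2^n : ℕ) : ℝ) = (2:ℝ)^n := by push_cast; ring
  have hmub' : ∀ b b', b ≠ b' → ∀ x x',
      ‖(inner ℂ (v b x) (v b' x') : ℂ)‖ ^ 2 = 1 / ((2^n : ℕ) : ℝ) := by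
    intro b b' h x x'; rw [hmub b b' h x x', hcast]
  have hbound := mub_sum_bound hd hL v horth hmub' Ψ hΨ
  have h4 : ∀ b, (∑ x, ‖(inner ℂ (v b x) Ψ : ℂ)‖ ^ 4)
      = ∑ x, ‖(inner ℂ (v b x) Ψ : ℂ)‖ ^ 2 * ‖(inner ℂ (v b x) Ψ : ℂ)‖ ^ 2 := by
    intro b; refine Finset.sum_congr rfl fun x _ => by ring
  have hpart2 : ∑ b, ∑ x, ‖(inner ℂ (v b x) Ψ : ℂ)‖ ^ 4 ≤ ((L : ℝ) + 2 ^ n - 1) / 2 ^ n := by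
    rw [Finset.sum_congr rfl (fun b _ => h4 b)]
    rw [hcast] at hbound
    exact hbound
  refine ⟨?_, hpart2⟩
  -- part 1
  set S : Fin L → ℝ := fun b => ∑ x, ‖(inner ℂ (v b x) Ψ : ℂ)‖ ^ 4 with hSdef
  have hsum1 : ∀ b, ∑ x, ‖(inner ℂ (v b x) Ψ : ℂ)‖ ^ 2 = 1 := by
    intro b; rw [parseval (v b) (horth b) hd Ψ, hΨ]; norm_num
  have hSpos : ∀ b, 0 < S b := by
    intro b
    have h1 := hsum1 b
    have hex : ∃ x, ‖(inner ℂ (v b x) Ψ : ℂ)‖ ^ 2 ≠ 0 := by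
      by_contra h
      push_neg at h
      rw [Finset.sum_congr rfl (fun x _ => h x)] at h1
      simp at h1
    obtain ⟨x, hx⟩ := hex
    have hn : ‖(inner ℂ (v b x) Ψ : ℂ)‖ ≠ 0 := by
      intro h0; exact hx (by rw [h0]; ring)
    have hx' : 0 < ‖(inner ℂ (v b x) Ψ : ℂ)‖ ^ 4 :=
      pow_pos (lt_of_le_of_ne (norm_nonneg _) (Ne.symm hn)) 4
    calc 0 < ‖(inner ℂ (v b x) Ψ : ℂ)‖ ^ 4 := hx'
    _ ≤ S b := Finset.single_le_sum
        (f := fun x => ‖(inner ℂ (v b x) Ψ : ℂ)‖ ^ 4)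
        (fun i _ => by positivity) (mem_univ x)
  -- Jensen for log
  have hjensen : ∑ b, (1/(L:ℝ)) • Real.log (S b)
      ≤ Real.log (∑ b, (1/(L:ℝ)) • S b) := by
    refine (strictConcaveOn_log_Ioi.concaveOn).le_map_sum (fun i _ => by positivity) ?_
      (fun i _ => Set.mem_Ioi.mpr (hSpos i))
    simp
    field_simp
  have hmean : ∑ b, (1/(L:ℝ)) • S b ≤ ((L : ℝ) + 2 ^ n - 1) / (2 ^ n * L) := by
    simp only [smul_eq_mul, ← Finset.mul_sum]
    have hrw : ((L : ℝ) + 2 ^ n - 1) / (2 ^ n * L)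
        = (1/(L:ℝ)) * (((L : ℝ) + 2 ^ n - 1) / 2 ^ n) := by
      field_simp
    rw [hrw]
    exact mul_le_mul_of_nonneg_left hpart2 (by positivity)
  have hmeanpos : 0 < ∑ b, (1/(L:ℝ)) • S b := by
    have : (0:ℝ) < ∑ b, (1/(L:ℝ)) * S b :=
      Finset.sum_pos (fun b _ => by have := hSpos b; positivity) (univ_nonempty_iff.mpr ⟨⟨0, hL⟩⟩)
    simpa using this
  have hlog : Real.log (∑ b, (1/(L:ℝ)) • S b) ≤ Real.log (((L : ℝ) + 2 ^ n - 1) / (2 ^ n * L)) :=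
    Real.log_le_log hmeanpos hmean
  have hfin : ∑ b, (1/(L:ℝ)) • Real.log (S b) ≤ Real.log (((L : ℝ) + 2 ^ n - 1) / (2 ^ n * L)) :=
    le_trans hjensen hlog
  have heq : (1 / (L : ℝ)) * ∑ b, -Real.log (S b) = -(∑ b, (1/(L:ℝ)) • Real.log (S b)) := by
    rw [Finset.mul_sum, ← Finset.sum_neg_distrib]
    exact Finset.sum_congr rfl fun b _ => by simp only [smul_eq_mul]; ring
  rw [heq]
  linarith
end
end
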